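/- Expected sketch size bound: let σ be a uniformly random permutation of {1,…,m} and let k be an integer with 1 ≤ k ≤ m. The expected number of indices j ∈ {1,…,m} such that σ(j) is among the k smallest values of {σ(1),…,σ(j)} equals ∑_{j=1}^m min{1, k/j}, and this quantity is at most k·(1 + ln(m/k)). -/

import Mathlib

open scoped BigOperators
open Finset Equiv

private lemma swap_le_iff' {m : ℕ} {j x : Fin m} (hx : x ≤ j) (i : Fin m) :
    Equiv.swap j x i ≤ j ↔ i ≤ j := by
  rcases eq_or_ne i j with rfl | hij
  · simp [Equiv.swap_apply_left, hx]
  rcases eq_or_ne i x with rfl | hix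
  · simp [Equiv.swap_apply_right, hx]
  · rw [Equiv.swap_apply_of_ne_of_ne hij hix]

private lemma card_filter_comp_perm {α : Type*} [Fintype α] [DecidableEq α]
    (e : Equiv.Perm α) (p : α → Prop) [DecidablePred p] :
    (univ.filter (fun i => p (e i))).card = (univ.filter p).card := by
  apply Finset.card_bij (fun a _ => e a)
  · intro a ha; simpa using (mem_filter.mp ha).2
  · intro a _ b _ hab; exact e.injective hab
  · intro b hb; exact ⟨e.symm b, by simpa using (mem_filter.mp hb).2, by simp⟩

private lemma inner_count {m : ℕ} (k : ℕ) (σ : Equiv.Perm (Fin m)) (j : Fin m) :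
    ((Iic j).filter (fun x =>
      (univ.filter (fun i : Fin m => i ≤ j ∧ σ i ≤ σ x)).card ≤ k)).card
      = min k (j.val + 1) := by
  set B : Fin m → ℕ := fun x => (univ.filter (fun i : Fin m => i ≤ j ∧ σ i ≤ σ x)).card with hB
  have hmono : ∀ x y : Fin m, y ≤ j → σ x < σ y → B x < B y := by
    intro x y hy hxy
    apply Finset.card_lt_card
    constructor
    · intro i hi
      simp only [mem_filter, mem_univ, true_and] at hi ⊢
      exact ⟨hi.1, hi.2.trans hxy.le⟩
    · intro hsub
      have hy' : y ∈ univ.filter (fun i : Fin m => i ≤ j ∧ σ i ≤ σ y) := by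
        simp [hy]
      have := hsub hy'
      simp only [mem_filter, mem_univ, true_and] at this
      exact absurd this.2 (not_le.mpr hxy)
  have hinj : Set.InjOn B (Iic j : Finset (Fin m)) := by
    intro x hx y hy hxy
    simp only [coe_Iic, Set.mem_Iic] at hx hy
    rcases lt_trichotomy (σ x) (σ y) with h | h | h
    · exact absurd hxy (hmono x y hy h).ne
    · exact σ.injective h
    · exact absurd hxy.symm (hmono y x hx h).ne
  have hmem : ∀ x ∈ Iic j, B x ∈ Icc 1 (j.val + 1) := by
    intro x hx
    rw [mem_Iic] at hx
    rw [mem_Icc]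
    constructor
    · rw [Nat.one_le_iff_ne_zero, ← Nat.pos_iff_ne_zero, Finset.card_pos]
      exact ⟨x, by simp [hx]⟩
    · calc B x ≤ (Iic j).card := by
            apply Finset.card_le_card
            intro i hi
            simp only [mem_filter, mem_univ, true_and] at hi
            exact mem_Iic.mpr hi.1
        _ = j.val + 1 := Fin.card_Iic j
  have himg : (Iic j).image B = Icc 1 (j.val + 1) := by
    apply Finset.eq_of_subset_of_card_le
    · intro b hb
      obtain ⟨x, hx, rfl⟩ := mem_image.mp hb
      exact hmem x hx
    · rw [Nat.card_Icc, Finset.card_image_of_injOn hinj, Fin.card_Iic]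
      omega
  have key : ((Iic j).filter (fun x => B x ≤ k)).card
      = ((Icc 1 (j.val + 1)).filter (fun r => r ≤ k)).card := by
    rw [← himg, Finset.filter_image,
      Finset.card_image_of_injOn (hinj.mono (by intro x hx; exact (mem_filter.mp hx).1))]
  rw [key]
  have : (Icc 1 (j.val + 1)).filter (fun r => r ≤ k) = Icc 1 (min k (j.val + 1)) := by
    ext r
    simp only [mem_filter, mem_Icc, le_min_iff]
    omega
  rw [this, Nat.card_Icc]
  omega

private lemma count_perm {m : ℕ} (k : ℕ) (j : Fin m) :
    (univ.filter (fun σ : Equiv.Perm (Fin m) =>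
        (univ.filter (fun i : Fin m => i ≤ j ∧ σ i ≤ σ j)).card ≤ k)).card * (j.val + 1)
      = m.factorial * min k (j.val + 1) := by
  have hswap : ∀ (x : Fin m), x ≤ j → ∀ σ : Equiv.Perm (Fin m),
      (univ.filter (fun i : Fin m => i ≤ j ∧ (σ * Equiv.swap j x) i ≤ (σ * Equiv.swap j x) j)).card
        = (univ.filter (fun i : Fin m => i ≤ j ∧ σ i ≤ σ x)).card := by
    intro x hx σ
    have h1 : ∀ i : Fin m, (i ≤ j ∧ (σ * Equiv.swap j x) i ≤ (σ * Equiv.swap j x) j)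
        ↔ (Equiv.swap j x i ≤ j ∧ σ (Equiv.swap j x i) ≤ σ x) := by
      intro i
      rw [swap_le_iff' hx i]
      simp [Equiv.Perm.mul_apply, Equiv.swap_apply_left]
    simp only [h1]
    exact card_filter_comp_perm (Equiv.swap j x) (fun i => i ≤ j ∧ σ i ≤ σ x)
  -- each x gives the same count
  have hxcount : ∀ x ∈ Iic j,
      (univ.filter (fun σ : Equiv.Perm (Fin m) =>
        (univ.filter (fun i : Fin m => i ≤ j ∧ σ i ≤ σ x)).card ≤ k)).card
      = (univ.filter (fun σ : Equiv.Perm (Fin m) =>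
        (univ.filter (fun i : Fin m => i ≤ j ∧ σ i ≤ σ j)).card ≤ k)).card := by
    intro x hx
    rw [mem_Iic] at hx
    rw [← card_filter_comp_perm (Equiv.mulRight (Equiv.swap j x))
      (fun σ : Equiv.Perm (Fin m) =>
        (univ.filter (fun i : Fin m => i ≤ j ∧ σ i ≤ σ j)).card ≤ k)]
    congr 1
    apply Finset.filter_congr
    intro σ _
    simp only [Equiv.coe_mulRight]
    exact iff_of_eq (congrArg (· ≤ k) (hswap x hx σ)).symm
  calc (univ.filter (fun σ : Equiv.Perm (Fin m) =>
        (univ.filter (fun i : Fin m => i ≤ j ∧ σ i ≤ σ j)).card ≤ k)).card * (j.val + 1)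
      = ∑ x ∈ Iic j, (univ.filter (fun σ : Equiv.Perm (Fin m) =>
        (univ.filter (fun i : Fin m => i ≤ j ∧ σ i ≤ σ x)).card ≤ k)).card := by
        rw [Finset.sum_congr rfl hxcount, Finset.sum_const, Fin.card_Iic, smul_eq_mul, mul_comm]
    _ = ∑ x ∈ Iic j, ∑ σ : Equiv.Perm (Fin m),
          (if (univ.filter (fun i : Fin m => i ≤ j ∧ σ i ≤ σ x)).card ≤ k then 1 else 0) := by
        simp only [Finset.card_filter]
    _ = ∑ σ : Equiv.Perm (Fin m), ∑ x ∈ Iic j,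
          (if (univ.filter (fun i : Fin m => i ≤ j ∧ σ i ≤ σ x)).card ≤ k then 1 else 0) :=
        Finset.sum_comm
    _ = ∑ σ : Equiv.Perm (Fin m), min k (j.val + 1) := by
        apply Finset.sum_congr rfl
        intro σ _
        rw [← Finset.card_filter]
        exact inner_count k σ j
    _ = m.factorial * min k (j.val + 1) := by
        rw [Finset.sum_const, smul_eq_mul, Finset.card_univ, Fintype.card_perm, Fintype.card_fin]

private lemma harmonic_tail_le (k : ℕ) (hk : 1 ≤ k) :
    ∀ n, k ≤ n → ∑ j ∈ Ico k n, (1 : ℝ) / ((j : ℝ) + 1) ≤ Real.log n - Real.log k := by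
  intro n hn
  induction n, hn using Nat.le_induction with
  | base => simp
  | succ n hn ih =>
    rw [Finset.sum_Ico_succ_top hn]
    have hn1 : (1 : ℝ) ≤ (n : ℝ) := by exact_mod_cast hk.trans hn
    have hstep : (1 : ℝ) / ((n : ℝ) + 1) ≤ Real.log (n + 1) - Real.log n := by
      have hpos : (0 : ℝ) < (n : ℝ) / ((n : ℝ) + 1) := by positivity
      have := Real.log_le_sub_one_of_pos hpos
      rw [Real.log_div (by linarith) (by linarith)] at this
      have h2 : (n : ℝ) / ((n : ℝ) + 1) - 1 = -(1 / ((n : ℝ) + 1)) := by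
        field_simp
        ring
      rw [h2] at this
      linarith
    push_cast
    linarith

theorem expected_sketch_size_bound
    (m k : ℕ) (hk : 1 ≤ k) (hkm : k ≤ m) :
    (∑ σ : Equiv.Perm (Fin m),
        ((Finset.univ.filter
            (fun j : Fin m =>
              (Finset.univ.filter (fun i : Fin m => i ≤ j ∧ σ i ≤ σ j)).card ≤ k)).card : ℝ))
        / (Nat.factorial m : ℝ)
      = ∑ j ∈ Finset.range m, min 1 ((k : ℝ) / ((j : ℝ) + 1))
    ∧ (∑ j ∈ Finset.range m, min 1 ((k : ℝ) / ((j : ℝ) + 1)))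
        ≤ (k : ℝ) * (1 + Real.log ((m : ℝ) / (k : ℝ))) := by
  have hfac : (0 : ℝ) < (Nat.factorial m : ℝ) := by exact_mod_cast m.factorial_pos
  constructor
  · -- equality part
    have hswap : (∑ σ : Equiv.Perm (Fin m),
        ((Finset.univ.filter
            (fun j : Fin m =>
              (Finset.univ.filter (fun i : Fin m => i ≤ j ∧ σ i ≤ σ j)).card ≤ k)).card : ℝ))
        = ∑ j : Fin m, ((univ.filter (fun σ : Equiv.Perm (Fin m) =>
            (univ.filter (fun i : Fin m => i ≤ j ∧ σ i ≤ σ j)).card ≤ k)).card : ℝ) := by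
      push_cast [Finset.card_filter]
      rw [Finset.sum_comm' (by intros; tauto)]
    rw [hswap, Finset.sum_div]
    rw [← Fin.sum_univ_eq_sum_range (fun j => min 1 ((k : ℝ) / ((j : ℝ) + 1))) m]
    apply Finset.sum_congr rfl
    intro j _
    have hcount := count_perm k j
    have hcast : ((univ.filter (fun σ : Equiv.Perm (Fin m) =>
        (univ.filter (fun i : Fin m => i ≤ j ∧ σ i ≤ σ j)).card ≤ k)).card : ℝ) * ((j : ℝ) + 1)
        = (Nat.factorial m : ℝ) * (min k (j.val + 1) : ℕ) := by
      exact_mod_cast congrArg (Nat.cast : ℕ → ℝ) hcount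
    have hj1 : (0 : ℝ) < (j : ℝ) + 1 := by positivity
    rw [div_eq_iff (ne_of_gt hfac)]
    rcases le_or_gt k (j.val + 1) with h | h
    · have hmin : min k (j.val + 1) = k := min_eq_left h
      rw [hmin] at hcast
      have hmin2 : min 1 ((k : ℝ) / ((j : ℝ) + 1)) = (k : ℝ) / ((j : ℝ) + 1) := by
        apply min_eq_right
        rw [div_le_one hj1]
        exact_mod_cast h
      rw [hmin2]
      field_simp
      linarith [hcast]
    · have hmin : min k (j.val + 1) = j.val + 1 := min_eq_right h.le
      rw [hmin] at hcast
      have hmin2 : min 1 ((k : ℝ) / ((j : ℝ) + 1)) = 1 := by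
        apply min_eq_left
        rw [le_div_iff₀ hj1, one_mul]
        exact_mod_cast h.le
      rw [hmin2, one_mul]
      push_cast at hcast ⊢
      nlinarith [hcast]
  · -- inequality part
    have hsplit := Finset.sum_range_add_sum_Ico
      (fun j => min 1 ((k : ℝ) / ((j : ℝ) + 1))) hkm
    rw [← hsplit]
    have h1 : ∑ j ∈ Finset.range k, min 1 ((k : ℝ) / ((j : ℝ) + 1)) = k := by
      rw [Finset.sum_congr rfl (fun j hj => ?_), Finset.sum_const, Finset.card_range,
        nsmul_eq_mul, mul_one]
      rw [Finset.mem_range] at hj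
      apply min_eq_left
      rw [le_div_iff₀ (by positivity)]
      rw [one_mul]
      exact_mod_cast hj
    have h2 : ∑ j ∈ Finset.Ico k m, min 1 ((k : ℝ) / ((j : ℝ) + 1))
        = (k : ℝ) * ∑ j ∈ Finset.Ico k m, 1 / ((j : ℝ) + 1) := by
      rw [Finset.mul_sum]
      apply Finset.sum_congr rfl
      intro j hj
      rw [Finset.mem_Ico] at hj
      rw [min_eq_right, mul_one_div]
      rw [div_le_one (by positivity)]
      have : (k : ℝ) ≤ (j : ℝ) := by exact_mod_cast hj.1
      linarith
    rw [h1, h2]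
    have h3 := harmonic_tail_le k hk m hkm
    have hklog : Real.log ((m : ℝ) / (k : ℝ)) = Real.log m - Real.log k := by
      rw [Real.log_div (by exact_mod_cast (by omega : m ≠ 0)) (by exact_mod_cast (by omega : k ≠ 0))]
    rw [hklog, mul_add, mul_one]
    have hk0 : (0 : ℝ) ≤ k := by positivity
    nlinarith [h3]
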